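/- Let K be a field of characteristic 0 and (g, κ) a finite-dimensional quadratic Lie algebra over K. Then the following are equivalent: (i) there exists an alternating bilinear form θ : g × g → K such that κ(x,⁅y,z⁆) = θ(⁅x,y⁆,z) − θ(⁅x,z⁆,y) + θ(⁅y,z⁆,x) for all x,y,z ∈ g (i.e. the Cartan 3-cocycle Ω(x,y,z) = κ(x,⁅y,z⁆) is a Chevalley–Eilenberg coboundary); (ii) there exists a Lie algebra derivation D : g → g such that κ(Dx,y) + κ(x,Dy) = 2·κ(x,y) for all x,y ∈ g (i.e. a derivation whose κ-symmetric part is the identity). -/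

import Mathlib

/-- For a finite-dimensional quadratic Lie algebra `(g, κ)` over a field of characteristic
zero, the Cartan 3-cocycle `Ω(x,y,z) = κ(x,⁅y,z⁆)` is a Chevalley–Eilenberg coboundary
(of an alternating bilinear form `θ`) if and only if there is a Lie algebra derivation
of `g` whose `κ`-symmetric part is the identity. -/
theorem cartan_cocycle_coboundary_iff_derivation
    (K : Type*) [Field K] [CharZero K]
    (g : Type*) [LieRing g] [LieAlgebra K g] [Module.Finite K g]
    (κ : g →ₗ[K] g →ₗ[K] K)
    (hsymm : ∀ x y : g, κ x y = κ y x)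
    (hnondeg : ∀ x : g, (∀ y : g, κ x y = 0) → x = 0)
    (hinv : ∀ x y z : g, κ ⁅x, y⁆ z = κ x ⁅y, z⁆) :
    (∃ θ : g →ₗ[K] g →ₗ[K] K, (∀ x : g, θ x x = 0) ∧
        ∀ x y z : g, κ x ⁅y, z⁆ = θ ⁅x, y⁆ z - θ ⁅x, z⁆ y + θ ⁅y, z⁆ x) ↔
    (∃ D : g →ₗ[K] g, (∀ x y : g, D ⁅x, y⁆ = ⁅D x, y⁆ + ⁅x, D y⁆) ∧
        ∀ x y : g, κ (D x) y + κ x (D y) = 2 * κ x y) := by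
  have skewL : ∀ a b c : g, κ ⁅a, b⁆ c = -κ ⁅b, a⁆ c := by
    intro a b c
    rw [← lie_skew b a, map_neg, LinearMap.neg_apply, neg_neg]
  have skewR : ∀ a b c : g, κ a ⁅b, c⁆ = -κ a ⁅c, b⁆ := by
    intro a b c
    rw [← lie_skew c b, map_neg, neg_neg]
  constructor
  · rintro ⟨θ, hθ0, hθ⟩
    -- θ is skew-symmetric
    have θskew : ∀ a b : g, θ a b = -θ b a := by
      intro a b
      have h := hθ0 (a + b)
      simp only [map_add, LinearMap.add_apply, hθ0] at h
      linear_combination h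
    -- build A with κ (A u) v = θ u v using nondegeneracy
    have hnd : LinearMap.BilinForm.Nondegenerate κ :=
      ⟨hnondeg, fun y hy => hnondeg y (fun x => by rw [hsymm]; exact hy x)⟩
    set A : g →ₗ[K] g :=
      (LinearMap.BilinForm.toDual κ hnd).symm.toLinearMap ∘ₗ θ with hA
    have hAκ : ∀ u v : g, κ (A u) v = θ u v := by
      intro u v
      simp only [hA, LinearMap.comp_apply, LinearEquiv.coe_coe]
      exact LinearMap.BilinForm.apply_toDual_symm_apply (B := κ) (hB := hnd) _ _
    refine ⟨LinearMap.id + A, ?_, ?_⟩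
    · intro x y
      simp only [LinearMap.add_apply, LinearMap.id_apply, add_lie, lie_add]
      have key : A ⁅x, y⁆ = ⁅A x, y⁆ + ⁅x, A y⁆ + ⁅x, y⁆ := by
        have h0 : ∀ z : g, κ (A ⁅x, y⁆ - (⁅A x, y⁆ + ⁅x, A y⁆ + ⁅x, y⁆)) z = 0 := by
          intro z
          simp only [map_sub, map_add, LinearMap.sub_apply, LinearMap.add_apply]
          have e1 : κ ⁅A x, y⁆ z = θ x ⁅y, z⁆ := by rw [hinv, hAκ]
          have e2 : κ ⁅x, A y⁆ z = -θ y ⁅x, z⁆ := by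
            rw [skewL, hinv, hAκ]
          have e3 := hθ x y z
          have e4 := θskew x ⁅y, z⁆
          have e5 := θskew y ⁅x, z⁆
          have e6 := hinv x y z
          rw [hAκ]
          linear_combination -e1 - e2 - e3 - e4 + e5 - e6
        have := hnondeg _ h0
        rwa [sub_eq_zero] at this
      rw [key]; abel
    · intro x y
      simp only [LinearMap.add_apply, LinearMap.id_apply, map_add,
        LinearMap.add_apply]
      have e1 : κ (A x) y = θ x y := hAκ x y
      have e2 : κ x (A y) = -θ x y := by
        rw [hsymm, hAκ]; exact θskew y x
      rw [e1, e2]; ring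
  · rintro ⟨D, hD, hDκ⟩
    refine ⟨κ ∘ₗ D - κ, ?_, ?_⟩
    · intro x
      simp only [LinearMap.sub_apply, LinearMap.comp_apply]
      have h := hDκ x x
      have h2 : κ (D x) x = κ x (D x) := hsymm _ _
      have h4 : (2 : K) * κ (D x) x = 2 * κ x x := by linear_combination h + h2
      have h3 : κ (D x) x = κ x x := mul_left_cancel₀ two_ne_zero h4
      rw [h3]; ring
    · intro x y z
      simp only [LinearMap.sub_apply, LinearMap.comp_apply]
      -- expand D on brackets
      have a1 : κ (D ⁅x, y⁆) z = κ (D x) ⁅y, z⁆ - κ (D y) ⁅x, z⁆ := by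
        rw [hD, map_add, LinearMap.add_apply, hinv, skewL, hinv]
        ring
      have a2 : κ (D ⁅x, z⁆) y = -κ (D x) ⁅y, z⁆ - κ (D z) ⁅x, y⁆ := by
        rw [hD, map_add, LinearMap.add_apply, hinv, skewL, hinv]
        rw [skewR (D x) z y]; ring
      have a3 : κ (D ⁅y, z⁆) x = -κ (D y) ⁅x, z⁆ + κ (D z) ⁅x, y⁆ := by
        rw [hD, map_add, LinearMap.add_apply, hinv, skewL, hinv]
        rw [skewR (D y) z x, skewR (D z) y x]; ring
      -- the key relation E
      have E : κ (D x) ⁅y, z⁆ - κ (D y) ⁅x, z⁆ + κ (D z) ⁅x, y⁆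
          = 2 * κ x ⁅y, z⁆ := by
        have h := hDκ x ⁅y, z⁆
        have h2 : κ x (D ⁅y, z⁆) = -κ (D y) ⁅x, z⁆ + κ (D z) ⁅x, y⁆ := by
          rw [hsymm]; exact a3
        linear_combination h - h2
      -- remaining κ bracket terms
      have b1 : κ ⁅x, y⁆ z = κ x ⁅y, z⁆ := hinv x y z
      have b2 : κ ⁅x, z⁆ y = -κ x ⁅y, z⁆ := by
        rw [hinv, skewR x z y]
      have b3 : κ ⁅y, z⁆ x = κ x ⁅y, z⁆ := hsymm _ _
      linear_combination -a1 + a2 - a3 - 2 * E + b1 - b2 + b3
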